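/- Suppose the data matrix D_{0,t} has full row rank m+n, so Φ_t = D_{0,t}D_{0,t}ᵀ/t is positive definite, and let [B̂_t, Â_t] = X_{1,t}D_{0,t}ᵀ(D_{0,t}D_{0,t}ᵀ)^{-1} be the ordinary least-squares estimate of [B, A]. If γ_t > 0 satisfies σ_min(Φ_t) ≥ γ_t and δ_t = ‖W_{0,t}D_{0,t}ᵀ‖/t, then the estimation error satisfies ‖[B̂_t, Â_t] − [B, A]‖ ≤ δ_t/γ_t, i.e. the error is at most 1/SNR_t where SNR_t = γ_t/δ_t. -/

import Mathlib

open Matrix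

noncomputable def spNorm {α β : Type*} [Fintype α] [Fintype β] [DecidableEq β]
    (M : Matrix α β ℝ) : ℝ :=
  ‖LinearMap.toContinuousLinearMap (Matrix.toEuclideanLin M)‖

noncomputable def sigMin {α β : Type*} [Fintype α] [Fintype β] [DecidableEq β]
    (M : Matrix α β ℝ) : ℝ :=
  sInf ((fun x : EuclideanSpace ℝ β =>
    ‖LinearMap.toContinuousLinearMap (Matrix.toEuclideanLin M) x‖) '' {x | ‖x‖ = 1})

lemma spCLM_apply {α β : Type*} [Fintype α] [Fintype β] [DecidableEq β]
    (M : Matrix α β ℝ) (x : EuclideanSpace ℝ β) :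
    LinearMap.toContinuousLinearMap (Matrix.toEuclideanLin M) x =
      (WithLp.equiv 2 (α → ℝ)).symm (M *ᵥ (WithLp.equiv 2 (β → ℝ)) x) := by
  simp [Matrix.toEuclideanLin_apply]

lemma spNorm_mul_le {α β γ : Type*} [Fintype α] [Fintype β] [Fintype γ]
    [DecidableEq β] [DecidableEq γ]
    (M : Matrix α β ℝ) (N : Matrix β γ ℝ) :
    spNorm (M * N) ≤ spNorm M * spNorm N := by
  have h : LinearMap.toContinuousLinearMap (Matrix.toEuclideanLin (M * N)) =
      (LinearMap.toContinuousLinearMap (Matrix.toEuclideanLin M)).comp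
        (LinearMap.toContinuousLinearMap (Matrix.toEuclideanLin N)) := by
    ext x
    simp [ContinuousLinearMap.coe_comp', Function.comp, spCLM_apply,
      Matrix.toEuclideanLin_apply, Matrix.mulVec_mulVec]
  rw [spNorm, h]
  exact ContinuousLinearMap.opNorm_comp_le _ _

lemma spNorm_smul {α β : Type*} [Fintype α] [Fintype β] [DecidableEq β]
    (c : ℝ) (M : Matrix α β ℝ) : spNorm (c • M) = |c| * spNorm M := by
  have h : LinearMap.toContinuousLinearMap (Matrix.toEuclideanLin (c • M)) =
      c • LinearMap.toContinuousLinearMap (Matrix.toEuclideanLin M) := by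
    ext x
    simp [spCLM_apply, Matrix.smul_mulVec]
  rw [spNorm, h, norm_smul c (LinearMap.toContinuousLinearMap (Matrix.toEuclideanLin M)), Real.norm_eq_abs, spNorm]

lemma spNorm_inv_le {k : Type*} [Fintype k] [DecidableEq k]
    {Φ : Matrix k k ℝ} (hΦ : Φ.PosDef) {γ : ℝ} (hγ : 0 < γ)
    (hsig : γ ≤ sigMin Φ) : spNorm Φ⁻¹ ≤ γ⁻¹ := by
  set T := LinearMap.toContinuousLinearMap (Matrix.toEuclideanLin Φ) with hT
  set S := LinearMap.toContinuousLinearMap (Matrix.toEuclideanLin Φ⁻¹) with hS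
  have hdet : IsUnit Φ.det := hΦ.det_pos.ne'.isUnit
  have hTS : ∀ y, T (S y) = y := by
    intro y
    rw [hT, hS, spCLM_apply, spCLM_apply]
    simp [Matrix.mulVec_mulVec, Matrix.mul_nonsing_inv _ hdet]
  have h2 : ∀ x : EuclideanSpace ℝ k, γ * ‖x‖ ≤ ‖T x‖ := by
    intro x
    rcases eq_or_ne x 0 with rfl | hx
    · simp
    · have hxn : (0:ℝ) < ‖x‖ := norm_pos_iff.mpr hx
      set u : EuclideanSpace ℝ k := ‖x‖⁻¹ • x with hu
      have hun : ‖u‖ = 1 := by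
        rw [hu, norm_smul, norm_inv, norm_norm, inv_mul_cancel₀ hxn.ne']
      have hmem : ‖T u‖ ∈ ((fun x : EuclideanSpace ℝ k => ‖T x‖) '' {x | ‖x‖ = 1}) :=
        ⟨u, hun, rfl⟩
      have hbdd : BddBelow ((fun x : EuclideanSpace ℝ k => ‖T x‖) '' {x | ‖x‖ = 1}) :=
        ⟨0, fun y ⟨z, _, hz⟩ => hz ▸ norm_nonneg _⟩
      have h3 : γ ≤ ‖T u‖ := le_trans hsig (csInf_le hbdd hmem)
      have h4 : ‖T u‖ = ‖x‖⁻¹ * ‖T x‖ := by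
        rw [hu, T.map_smul, norm_smul, norm_inv, norm_norm]
      rw [h4] at h3
      calc γ * ‖x‖ ≤ (‖x‖⁻¹ * ‖T x‖) * ‖x‖ := by
            exact mul_le_mul_of_nonneg_right h3 hxn.le
        _ = ‖T x‖ := by field_simp
  have : spNorm Φ⁻¹ ≤ γ⁻¹ := by
    rw [spNorm, ← hS]
    refine ContinuousLinearMap.opNorm_le_bound _ (by positivity) fun y => ?_
    have h5 := h2 (S y)
    rw [hTS y] at h5
    rw [← inv_mul_cancel_left₀ hγ.ne' ‖S y‖]
    exact mul_le_mul_of_nonneg_left h5 (inv_pos.mpr hγ).le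
  exact this

/-- Lemma 1: the ordinary least-squares estimation error is bounded by the
inverse signal-to-noise ratio `δ/γ`. -/
theorem ols_estimation_error {n m t : ℕ} (ht : 0 < t)
    (A : Matrix (Fin n) (Fin n) ℝ) (B : Matrix (Fin n) (Fin m) ℝ)
    (X0 : Matrix (Fin n) (Fin t) ℝ) (U0 : Matrix (Fin m) (Fin t) ℝ)
    (W0 X1 : Matrix (Fin n) (Fin t) ℝ)
    (hdyn : X1 = A * X0 + B * U0 + W0)
    (D0 : Matrix (Fin m ⊕ Fin n) (Fin t) ℝ) (hD0 : D0 = fromRows U0 X0)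
    (hrank : D0.rank = m + n)
    (Φ : Matrix (Fin m ⊕ Fin n) (Fin m ⊕ Fin n) ℝ)
    (hΦ : Φ = ((t : ℝ)⁻¹) • (D0 * D0ᵀ))
    (γ δ : ℝ) (hγ : 0 < γ) (hsig : γ ≤ sigMin Φ)
    (hδ : δ = (t : ℝ)⁻¹ * spNorm (W0 * D0ᵀ))
    (BAh : Matrix (Fin n) (Fin m ⊕ Fin n) ℝ)
    (hBAh : BAh = X1 * D0ᵀ * (D0 * D0ᵀ)⁻¹) :
    Φ.PosDef ∧ spNorm (BAh - fromCols B A) ≤ δ / γ := by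
  have htR : (0:ℝ) < (t:ℝ) := by exact_mod_cast ht
  set G := D0 * D0ᵀ with hG
  -- G is invertible
  have hGrank : G.rank = Fintype.card (Fin m ⊕ Fin n) := by
    rw [hG, Matrix.rank_self_mul_transpose, hrank]
    simp [Fintype.card_sum, add_comm]
  have hGinj : Function.Injective G.mulVec := by
    have hsurj : Function.Surjective G.mulVecLin := by
      rw [← LinearMap.range_eq_top]
      apply Submodule.eq_top_of_finrank_eq
      rw [Module.finrank_fintype_fun_eq_card]
      exact hGrank
    exact (LinearMap.injective_iff_surjective).mpr hsurj
  have hGunit : IsUnit G := Matrix.mulVec_injective_iff_isUnit.mp hGinj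
  have hGdet : IsUnit G.det := (Matrix.isUnit_iff_isUnit_det G).mp hGunit
  -- G is positive semidefinite
  have hGpsd : G.PosSemidef := by
    rw [hG, show D0ᵀ = D0ᴴ from (Matrix.conjTranspose_eq_transpose_of_trivial D0).symm]
    exact Matrix.posSemidef_self_mul_conjTranspose D0
  -- G positive definite
  have hGpd : G.PosDef := by
    refine Matrix.PosDef.of_dotProduct_mulVec_pos hGpsd.1 fun x hx => ?_
    have h1 : (0:ℝ) ≤ star x ⬝ᵥ G *ᵥ x := hGpsd.dotProduct_mulVec_nonneg x
    have h2 : star x ⬝ᵥ G *ᵥ x ≠ 0 := by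
      rw [Ne, hGpsd.dotProduct_mulVec_zero_iff]
      intro h0
      exact hx (hGinj (h0.trans (Matrix.mulVec_zero G).symm))
    exact lt_of_le_of_ne h1 (Ne.symm h2)
  -- Φ positive definite
  have hΦpd : Φ.PosDef := by
    refine Matrix.PosDef.of_dotProduct_mulVec_pos ?_ fun x hx => ?_
    · simp only [hΦ, Matrix.IsHermitian, Matrix.conjTranspose_smul, star_trivial, hGpd.1.eq]
    · rw [hΦ, Matrix.smul_mulVec, dotProduct_smul]
      have := hGpd.dotProduct_mulVec_pos hx
      positivity
  refine ⟨hΦpd, ?_⟩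
  have hΦdet : IsUnit Φ.det := hΦpd.det_pos.ne'.isUnit
  -- G⁻¹ = t⁻¹ • Φ⁻¹
  have hGinv : G⁻¹ = (t:ℝ)⁻¹ • Φ⁻¹ := by
    apply Matrix.inv_eq_right_inv
    have : G = (t:ℝ) • Φ := by
      rw [hΦ, smul_smul, mul_inv_cancel₀ htR.ne', one_smul]
    rw [this, Matrix.smul_mul, Matrix.mul_smul, smul_smul,
      mul_inv_cancel₀ htR.ne', Matrix.mul_nonsing_inv _ hΦdet, one_smul]
  -- identify the error matrix
  have hErr : BAh - fromCols B A = ((t:ℝ)⁻¹ • (W0 * D0ᵀ)) * Φ⁻¹ := by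
    have hX1D : X1 * D0ᵀ = fromCols B A * G + W0 * D0ᵀ := by
      rw [hdyn, hG, hD0, ← Matrix.mul_assoc, Matrix.fromCols_mul_fromRows,
        Matrix.add_mul, Matrix.add_mul, Matrix.add_mul]
      abel
    rw [hBAh, hX1D, Matrix.add_mul, Matrix.mul_assoc (fromCols B A) G G⁻¹,
      Matrix.mul_nonsing_inv _ hGdet, Matrix.mul_one, add_sub_cancel_left, hGinv,
      Matrix.mul_smul, Matrix.smul_mul]
  rw [hErr, hδ, div_eq_mul_inv]
  calc spNorm (((t:ℝ)⁻¹ • (W0 * D0ᵀ)) * Φ⁻¹)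
      ≤ spNorm ((t:ℝ)⁻¹ • (W0 * D0ᵀ)) * spNorm Φ⁻¹ := spNorm_mul_le _ _
    _ = ((t:ℝ)⁻¹ * spNorm (W0 * D0ᵀ)) * spNorm Φ⁻¹ := by
        rw [spNorm_smul, abs_of_pos (inv_pos.mpr htR)]
    _ ≤ ((t:ℝ)⁻¹ * spNorm (W0 * D0ᵀ)) * γ⁻¹ := by
        apply mul_le_mul_of_nonneg_left (spNorm_inv_le hΦpd hγ hsig)
        have : (0:ℝ) ≤ spNorm (W0 * D0ᵀ) := norm_nonneg _
        positivity
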